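/- arXiv:2405.15038 — 3 statements merged into one kernel-verified Lean document; each statement's English description precedes it below -/
import Mathlib

section
/- Identifiability of the baseline effects: Suppose a, a† ∈ ℝ^n, W, W† ∈ ℝ^{n×K} with nonnegative entries, and U, U† ∈ ℝ^{n×d} with unit-norm rows (‖u_i‖₂ = ‖u†_i‖₂ = 1 for all i), and suppose W_{i'k'} = 0 and W†_{i'k'} = 0 for some i' ∈ [n], k' ∈ [K]. If a_i + a_j + W_{ik} W_{jk} ⟨u_i, u_j⟩ = a†_i + a†_j + W†_{ik} W†_{jk} ⟨u†_i, u†_j⟩ for all i, j ∈ [n] and k ∈ [K], then a = a†. -/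
open Matrix Finset

/-- **Identifiability of the baseline effects.**
If two parameter sets `(a, W, U)` and `(a†, W†, U†)` with nonnegative weights,
unit-norm latent positions, and a common zero entry of the weight matrices
produce the same log-odds `a_i + a_j + W_{ik} W_{jk} ⟨u_i, u_j⟩` for all
`i, j, k`, then the baseline effects agree: `a = a†`. -/
theorem identifiability_baseline (n K d : ℕ)
    (a adag : Fin n → ℝ)
    (W Wdag : Matrix (Fin n) (Fin K) ℝ)
    (U Udag : Matrix (Fin n) (Fin d) ℝ)
    (hW : ∀ i k, 0 ≤ W i k) (hWdag : ∀ i k, 0 ≤ Wdag i k)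
    (hUnorm : ∀ i, ∑ l, (U i l) ^ 2 = 1)
    (hUdagnorm : ∀ i, ∑ l, (Udag i l) ^ 2 = 1)
    (hzero : ∃ i' : Fin n, ∃ k' : Fin K, W i' k' = 0 ∧ Wdag i' k' = 0)
    (heq : ∀ i j : Fin n, ∀ k : Fin K,
      a i + a j + W i k * W j k * ∑ l, U i l * U j l
        = adag i + adag j + Wdag i k * Wdag j k * ∑ l, Udag i l * Udag j l) :
    a = adag := by
  obtain ⟨i', k', hz1, hz2⟩ := hzero
  have key : ∀ j, a i' + a j = adag i' + adag j := by
    intro j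
    have h := heq i' j k'
    rw [hz1, hz2] at h
    simpa using h
  have hi' : a i' = adag i' := by have := key i'; linarith
  funext j
  have := key j
  linarith
end

section
/- Identifiability of the preference weights given equal baseline effects: Suppose a ∈ ℝ^n, W, W† ∈ ℝ^{n×K} with nonnegative entries, and U, U† ∈ ℝ^{n×d} with unit-norm rows (‖u_i‖₂ = ‖u†_i‖₂ = 1 for all i). If a_i + a_j + W_{ik} W_{jk} ⟨u_i, u_j⟩ = a_i + a_j + W†_{ik} W†_{jk} ⟨u†_i, u†_j⟩ for all i, j ∈ [n] and k ∈ [K] (in particular for i = j), then W = W†. -/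
open Matrix Finset

/-- **Identifiability of the preference weights given equal baseline effects.**
If `(a, W, U)` and `(a, W†, U†)` with nonnegative weights and unit-norm latent
positions produce the same log-odds `a_i + a_j + W_{ik} W_{jk} ⟨u_i, u_j⟩` for
all `i, j, k` (in particular for `i = j`), then `W = W†`. -/
theorem identifiability_weights (n K d : ℕ)
    (a : Fin n → ℝ)
    (W Wdag : Matrix (Fin n) (Fin K) ℝ)
    (U Udag : Matrix (Fin n) (Fin d) ℝ)
    (hW : ∀ i k, 0 ≤ W i k) (hWdag : ∀ i k, 0 ≤ Wdag i k)
    (hUnorm : ∀ i, ∑ l, (U i l) ^ 2 = 1)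
    (hUdagnorm : ∀ i, ∑ l, (Udag i l) ^ 2 = 1)
    (heq : ∀ i j : Fin n, ∀ k : Fin K,
      a i + a j + W i k * W j k * ∑ l, U i l * U j l
        = a i + a j + Wdag i k * Wdag j k * ∑ l, Udag i l * Udag j l) :
    W = Wdag := by
  ext i k
  have h := heq i i k
  have h1 : ∑ l, U i l * U i l = 1 := by
    simpa [sq] using hUnorm i
  have h2 : ∑ l, Udag i l * Udag i l = 1 := by
    simpa [sq] using hUdagnorm i
  rw [h1, h2] at h
  have hsq : W i k ^ 2 = Wdag i k ^ 2 := by nlinarith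
  nlinarith [hW i k, hWdag i k]
end

section
/- Hard-thresholding relative error bound with over-specified sparsity: Let W, W* ∈ ℝ^{n×K} with ‖W*‖_0 ≤ s* and let s = γ s* for some γ > 1 (with s < nK). Let T_s(W) denote the matrix obtained from W by keeping its s entries of largest absolute value and setting all other entries to zero. Then ‖T_s(W) − W*‖_F² ≤ (1 + 2√(s*/(s − s*))) ‖W − W*‖_F². -/
open Finset

/-- **Hard-thresholding relative error bound with over-specified sparsity.**
Let `Wstar` have at most `s*` nonzero entries and `s = γ s*` for some `γ > 1`
(with `s < nK`).  Let `T` be obtained from `W` by keeping a set `S` of `s`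
entries of largest absolute value and zeroing the rest.  Then
`‖T - Wstar‖_F² ≤ (1 + 2 √(s*/(s - s*))) ‖W - Wstar‖_F²`. -/
theorem hard_thresholding_relative_error (n K s sstar : ℕ) (γ : ℝ)
    (hγ : 1 < γ) (hs : (s : ℝ) = γ * sstar) (hsnK : s < n * K)
    (W Wstar T : Matrix (Fin n) (Fin K) ℝ)
    (hWstar : (univ.filter fun p : Fin n × Fin K => Wstar p.1 p.2 ≠ 0).card ≤ sstar)
    (S : Finset (Fin n × Fin K))
    (hcard : S.card = s)
    (hlargest : ∀ p ∈ S, ∀ q ∉ S, |W q.1 q.2| ≤ |W p.1 p.2|)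
    (hT : ∀ i k, T i k = if (i, k) ∈ S then W i k else 0) :
    ∑ i, ∑ k, (T i k - Wstar i k) ^ 2
      ≤ (1 + 2 * Real.sqrt ((sstar : ℝ) / ((s : ℝ) - sstar)))
        * ∑ i, ∑ k, (W i k - Wstar i k) ^ 2 := by
  classical
  set ρ : ℝ := Real.sqrt ((sstar : ℝ) / ((s : ℝ) - sstar)) with hρdef
  have hρ0 : 0 ≤ ρ := Real.sqrt_nonneg _
  set f : Fin n × Fin K → ℝ := fun p => (W p.1 p.2 - Wstar p.1 p.2) ^ 2 with hfdef
  have hf0 : ∀ p, 0 ≤ f p := fun p => sq_nonneg _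
  set E : ℝ := ∑ p : Fin n × Fin K, f p with hEdef
  have hE0 : 0 ≤ E := Finset.sum_nonneg fun p _ => hf0 p
  have hLconv : ∑ i, ∑ k, (T i k - Wstar i k) ^ 2
      = ∑ p : Fin n × Fin K, (T p.1 p.2 - Wstar p.1 p.2) ^ 2 :=
    (Fintype.sum_prod_type (f := fun p : Fin n × Fin K =>
      (T p.1 p.2 - Wstar p.1 p.2) ^ 2)).symm
  have hRconv : ∑ i, ∑ k, (W i k - Wstar i k) ^ 2 = E :=
    (Fintype.sum_prod_type (f := fun p : Fin n × Fin K =>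
      (W p.1 p.2 - Wstar p.1 p.2) ^ 2)).symm
  have hL : ∑ i, ∑ k, (T i k - Wstar i k) ^ 2
      = ∑ p ∈ S, f p + ∑ p ∈ Sᶜ, (Wstar p.1 p.2) ^ 2 := by
    rw [hLconv, ← Finset.sum_add_sum_compl S]
    congr 1
    · refine Finset.sum_congr rfl fun p hp => ?_
      simp [hT, hfdef, hp]
    · refine Finset.sum_congr rfl fun p hp => ?_
      have hp' : p ∉ S := Finset.mem_compl.mp hp
      simp [hT, hp']
  have hsplit : ∑ p ∈ S, f p + ∑ p ∈ Sᶜ, f p = E :=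
    Finset.sum_add_sum_compl S f
  set A : Finset (Fin n × Fin K) := Sᶜ.filter (fun p => Wstar p.1 p.2 ≠ 0) with hAdef
  have key : ∑ p ∈ Sᶜ, ((Wstar p.1 p.2) ^ 2 - f p) ≤ 2 * ρ * E := by
    have h1 : ∑ p ∈ Sᶜ, ((Wstar p.1 p.2) ^ 2 - f p)
        ≤ ∑ p ∈ A, ((Wstar p.1 p.2) ^ 2 - f p) := by
      rw [← Finset.sum_filter_add_sum_filter_not Sᶜ (fun p => Wstar p.1 p.2 ≠ 0)]
      have h2 : ∑ p ∈ Sᶜ.filter (fun p => ¬ Wstar p.1 p.2 ≠ 0),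
          ((Wstar p.1 p.2) ^ 2 - f p) ≤ 0 := by
        apply Finset.sum_nonpos
        intro p hp
        have h0 : Wstar p.1 p.2 = 0 := by
          have := (Finset.mem_filter.mp hp).2
          simpa using this
        have hfp : f p = (W p.1 p.2) ^ 2 := by simp [hfdef, h0]
        rw [h0, hfp]
        nlinarith [sq_nonneg (W p.1 p.2)]
      linarith
    rcases A.eq_empty_or_nonempty with hAe | hAne
    · rw [hAe] at h1
      simp only [Finset.sum_empty] at h1
      have : 0 ≤ 2 * ρ * E := by positivity
      linarith
    · -- main case
      set B : Finset (Fin n × Fin K) := S.filter (fun p => ¬ Wstar p.1 p.2 ≠ 0) with hBdef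
      set C : Finset (Fin n × Fin K) := S.filter (fun p => Wstar p.1 p.2 ≠ 0) with hCdef
      have hCB : C.card + B.card = s := by
        rw [hCdef, hBdef, Finset.card_filter_add_card_filter_not, hcard]
      have hAsub : A ⊆ univ.filter (fun p : Fin n × Fin K => Wstar p.1 p.2 ≠ 0) :=
        Finset.filter_subset_filter _ (Finset.subset_univ _)
      have hCsub : C ⊆ univ.filter (fun p : Fin n × Fin K => Wstar p.1 p.2 ≠ 0) :=
        Finset.filter_subset_filter _ (Finset.subset_univ _)
      have hdisjAC : Disjoint A C := by
        refine Finset.disjoint_left.mpr fun p hpA hpC => ?_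
        have h1 : p ∉ S := Finset.mem_compl.mp (Finset.mem_filter.mp hpA).1
        exact h1 (Finset.mem_filter.mp hpC).1
      have hAC : A.card + C.card ≤ sstar := by
        have hcu := Finset.card_union_of_disjoint hdisjAC
        have hsub : A ∪ C ⊆ univ.filter (fun p : Fin n × Fin K => Wstar p.1 p.2 ≠ 0) :=
          Finset.union_subset hAsub hCsub
        have := Finset.card_le_card hsub
        omega
      have hsstar1 : 1 ≤ sstar := by
        obtain ⟨p, hp⟩ := hAne
        have : 0 < A.card := Finset.card_pos.mpr ⟨p, hp⟩
        omega
      have hss : sstar < s := by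
        have h1 : (sstar : ℝ) < s := by
          rw [hs]
          have : (1 : ℝ) ≤ (sstar : ℝ) := by exact_mod_cast hsstar1
          nlinarith
        exact_mod_cast h1
      -- real quantities
      set a2 : ℝ := ∑ p ∈ A, f p with ha2def
      set b2 : ℝ := ∑ p ∈ B, f p with hb2def
      set Q : ℝ := ∑ p ∈ A, (W p.1 p.2) ^ 2 with hQdef
      have ha20 : 0 ≤ a2 := Finset.sum_nonneg fun p _ => hf0 p
      have hb20 : 0 ≤ b2 := Finset.sum_nonneg fun p _ => hf0 p
      have hQ0 : 0 ≤ Q := Finset.sum_nonneg fun p _ => sq_nonneg _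
      set k : ℝ := (A.card : ℝ) with hkdef
      set m : ℝ := (B.card : ℝ) with hmdef
      have hm0 : (0 : ℝ) < m := by
        rw [hmdef]
        have : 0 < B.card := by omega
        exact_mod_cast this
      have hkm' : k ≤ m := by
        rw [hkdef, hmdef]
        have : A.card ≤ B.card := by omega
        exact_mod_cast this
      have hmd : (s : ℝ) - sstar ≤ m := by
        rw [hmdef]
        have h1 : s - sstar ≤ B.card := by omega
        have h2 : ((s - sstar : ℕ) : ℝ) ≤ (B.card : ℝ) := by exact_mod_cast h1
        have h3 : ((s - sstar : ℕ) : ℝ) = (s : ℝ) - sstar :=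
          Nat.cast_sub (le_of_lt hss)
        linarith
      have hd0 : (0 : ℝ) < (s : ℝ) - sstar := by
        have : (sstar : ℝ) < s := by exact_mod_cast hss
        linarith
      have hk0 : 0 ≤ k := by rw [hkdef]; positivity
      have hksstar : k ≤ sstar := by
        rw [hkdef]
        have : A.card ≤ sstar := by omega
        exact_mod_cast this
      -- entries in A are dominated by entries in B
      have hstep1 : ∀ p ∈ A, ∀ q ∈ B, (W p.1 p.2) ^ 2 ≤ (W q.1 q.2) ^ 2 := by
        intro p hp q hq
        have hpS : p ∉ S := Finset.mem_compl.mp (Finset.mem_filter.mp hp).1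
        have hqS : q ∈ S := (Finset.mem_filter.mp hq).1
        have habs := hlargest q hqS p hpS
        calc (W p.1 p.2) ^ 2 = |W p.1 p.2| ^ 2 := (sq_abs _).symm
          _ ≤ |W q.1 q.2| ^ 2 := pow_le_pow_left₀ (abs_nonneg _) habs 2
          _ = (W q.1 q.2) ^ 2 := sq_abs _
      have hfB : ∀ q ∈ B, f q = (W q.1 q.2) ^ 2 := by
        intro q hq
        have h0 : Wstar q.1 q.2 = 0 := by
          have := (Finset.mem_filter.mp hq).2
          simpa using this
        simp [hfdef, h0]
      -- m * Q ≤ k * b2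
      have hQb : m * Q ≤ k * b2 := by
        have h1 : ∀ q ∈ B, Q ≤ k * f q := by
          intro q hq
          rw [hfB q hq]
          calc Q = ∑ p ∈ A, (W p.1 p.2) ^ 2 := rfl
            _ ≤ ∑ _p ∈ A, (W q.1 q.2) ^ 2 :=
                Finset.sum_le_sum fun p hp => hstep1 p hp q hq
            _ = k * (W q.1 q.2) ^ 2 := by
                rw [Finset.sum_const, nsmul_eq_mul, hkdef]
        calc m * Q = ∑ _q ∈ B, Q := by rw [Finset.sum_const, nsmul_eq_mul, hmdef]
          _ ≤ ∑ q ∈ B, k * f q := Finset.sum_le_sum h1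
          _ = k * b2 := by rw [← Finset.mul_sum, hb2def]
      -- Cauchy-Schwarz
      have hCS : ∑ p ∈ A, |W p.1 p.2| * |W p.1 p.2 - Wstar p.1 p.2|
          ≤ Real.sqrt Q * Real.sqrt a2 := by
        have h := Real.sum_mul_le_sqrt_mul_sqrt A
          (fun p => |W p.1 p.2|) (fun p => |W p.1 p.2 - Wstar p.1 p.2|)
        have hQ' : ∑ p ∈ A, |W p.1 p.2| ^ 2 = Q := by
          rw [hQdef]; exact Finset.sum_congr rfl fun p _ => sq_abs _
        have ha' : ∑ p ∈ A, |W p.1 p.2 - Wstar p.1 p.2| ^ 2 = a2 := by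
          rw [ha2def]; exact Finset.sum_congr rfl fun p _ => sq_abs _
        rw [hQ', ha'] at h
        exact h
      -- excess bound on A
      have hexc : ∑ p ∈ A, ((Wstar p.1 p.2) ^ 2 - f p)
          ≤ Q + 2 * (Real.sqrt Q * Real.sqrt a2) := by
        have hpt : ∀ p ∈ A, (Wstar p.1 p.2) ^ 2 - f p
            ≤ (W p.1 p.2) ^ 2 + 2 * (|W p.1 p.2| * |W p.1 p.2 - Wstar p.1 p.2|) := by
          intro p _
          have h2 : -(|W p.1 p.2| * |W p.1 p.2 - Wstar p.1 p.2|)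
              ≤ W p.1 p.2 * (W p.1 p.2 - Wstar p.1 p.2) := by
            rw [← abs_mul]
            exact neg_abs_le _
          have hfp : f p = (W p.1 p.2 - Wstar p.1 p.2) ^ 2 := rfl
          have hid : (Wstar p.1 p.2) ^ 2 - (W p.1 p.2 - Wstar p.1 p.2) ^ 2
              = (W p.1 p.2) ^ 2 - 2 * (W p.1 p.2 * (W p.1 p.2 - Wstar p.1 p.2)) := by
            ring
          rw [hfp, hid]
          linarith
        calc ∑ p ∈ A, ((Wstar p.1 p.2) ^ 2 - f p)
            ≤ ∑ p ∈ A, ((W p.1 p.2) ^ 2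
                + 2 * (|W p.1 p.2| * |W p.1 p.2 - Wstar p.1 p.2|)) :=
              Finset.sum_le_sum hpt
          _ = Q + 2 * ∑ p ∈ A, |W p.1 p.2| * |W p.1 p.2 - Wstar p.1 p.2| := by
              rw [Finset.sum_add_distrib, ← Finset.mul_sum, hQdef]
          _ ≤ Q + 2 * (Real.sqrt Q * Real.sqrt a2) := by linarith [hCS]
      -- ratio bounds
      set r : ℝ := k / m with hrdef
      have hr0 : 0 ≤ r := div_nonneg hk0 (le_of_lt hm0)
      have hr1 : r ≤ 1 := by
        rw [hrdef, div_le_one hm0]; exact hkm'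
      have hQr : Q ≤ r * b2 := by
        rw [hrdef, div_mul_eq_mul_div, le_div_iff₀ hm0]
        linarith [hQb, mul_comm Q m]
      have hsr0 : 0 ≤ Real.sqrt r := Real.sqrt_nonneg _
      have hsr1 : Real.sqrt r ≤ 1 := Real.sqrt_le_one.mpr hr1
      have hsrρ : Real.sqrt r ≤ ρ := by
        rw [hρdef]
        apply Real.sqrt_le_sqrt
        rw [hrdef]
        exact div_le_div₀ (by positivity) hksstar hd0 hmd
      have hrsr : r ≤ Real.sqrt r := by
        have h := Real.mul_self_sqrt hr0
        have h2 : Real.sqrt r * Real.sqrt r ≤ Real.sqrt r * 1 :=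
          mul_le_mul_of_nonneg_left hsr1 hsr0
        linarith
      -- combine
      have hQsqrt : Real.sqrt Q ≤ Real.sqrt r * Real.sqrt b2 := by
        rw [← Real.sqrt_mul hr0]
        exact Real.sqrt_le_sqrt hQr
      have hsqb2 : 0 ≤ Real.sqrt b2 := Real.sqrt_nonneg _
      have hsqa2 : 0 ≤ Real.sqrt a2 := Real.sqrt_nonneg _
      have hab : 2 * (Real.sqrt a2 * Real.sqrt b2) ≤ a2 + b2 := by
        have h := two_mul_le_add_sq (Real.sqrt a2) (Real.sqrt b2)
        rw [Real.sq_sqrt ha20, Real.sq_sqrt hb20] at h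
        linarith
      have habE : a2 + b2 ≤ E := by
        have hdisjAB : Disjoint A B := by
          refine Finset.disjoint_left.mpr fun p hpA hpB => ?_
          have h1 : p ∉ S := Finset.mem_compl.mp (Finset.mem_filter.mp hpA).1
          exact h1 (Finset.mem_filter.mp hpB).1
        have h1 : a2 + b2 = ∑ p ∈ A ∪ B, f p := (Finset.sum_union hdisjAB).symm
        rw [h1, hEdef]
        exact Finset.sum_le_sum_of_subset_of_nonneg (Finset.subset_univ _)
          (fun p _ _ => hf0 p)
      have hfinal : Q + 2 * (Real.sqrt Q * Real.sqrt a2) ≤ 2 * ρ * E := by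
        have t1 : Real.sqrt Q * Real.sqrt a2
            ≤ Real.sqrt r * (Real.sqrt a2 * Real.sqrt b2) := by
          calc Real.sqrt Q * Real.sqrt a2
              ≤ (Real.sqrt r * Real.sqrt b2) * Real.sqrt a2 :=
                mul_le_mul_of_nonneg_right hQsqrt hsqa2
            _ = Real.sqrt r * (Real.sqrt a2 * Real.sqrt b2) := by ring
        have t2 : Q ≤ Real.sqrt r * b2 := by
          calc Q ≤ r * b2 := hQr
            _ ≤ Real.sqrt r * b2 := mul_le_mul_of_nonneg_right hrsr hb20
        have t3 : 2 * (Real.sqrt r * (Real.sqrt a2 * Real.sqrt b2))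
            ≤ Real.sqrt r * (a2 + b2) := by
          have e1 : 2 * (Real.sqrt r * (Real.sqrt a2 * Real.sqrt b2))
              = Real.sqrt r * (2 * (Real.sqrt a2 * Real.sqrt b2)) := by ring
          rw [e1]
          exact mul_le_mul_of_nonneg_left hab hsr0
        have t4 : Real.sqrt r * b2 + Real.sqrt r * (a2 + b2)
            ≤ Real.sqrt r * (2 * (a2 + b2)) := by
          have e2 : Real.sqrt r * b2 + Real.sqrt r * (a2 + b2)
              = Real.sqrt r * (a2 + 2 * b2) := by ring
          rw [e2]
          exact mul_le_mul_of_nonneg_left (by linarith) hsr0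
        have t5 : Real.sqrt r * (2 * (a2 + b2)) ≤ ρ * (2 * (a2 + b2)) :=
          mul_le_mul_of_nonneg_right hsrρ (by linarith)
        have t6 : ρ * (2 * (a2 + b2)) ≤ ρ * (2 * E) :=
          mul_le_mul_of_nonneg_left (by linarith) hρ0
        have e3 : ρ * (2 * E) = 2 * ρ * E := by ring
        linarith
      linarith [h1, hexc, hfinal]
  -- final assembly
  rw [hL, hRconv]
  have hsub : ∑ p ∈ Sᶜ, ((Wstar p.1 p.2) ^ 2 - f p)
      = ∑ p ∈ Sᶜ, (Wstar p.1 p.2) ^ 2 - ∑ p ∈ Sᶜ, f p :=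
    Finset.sum_sub_distrib _ _
  have hring : (1 + 2 * ρ) * E = E + 2 * ρ * E := by ring
  linarith [key, hsplit, hsub]
end
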